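/- Let v > 0 and let μ be the centered Gaussian probability measure on ℝ with variance v. Then for every a ∈ ℝ and every ε ≥ 0, |μ([a − ε, a + ε]) − 2ε/√(2πv)| ≤ ε(|a| + ε)²/(√(2π) v^{3/2}). (This is the quantitative two-term small-ball expansion underlying Lemma 1(1) in the constant-volatility case: the Gaussian probability of an interval of length 2ε centered at −a equals 2ε·φ(0)/√v up to an error controlled by a² and ε.) -/

import Mathlib

open MeasureTheory ProbabilityTheory

/-- Quantitative two-term small-ball expansion underlying Lemma 1(1), constant-volatility case:
for a centered Gaussian measure with variance `v > 0`,
`|μ([a−ε, a+ε]) − 2ε/√(2πv)| ≤ ε(|a|+ε)² / (√(2π) v^{3/2})`. -/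
theorem gaussian_interval_expansion (v : NNReal) (hv : 0 < v) (a ε : ℝ) (hε : 0 ≤ ε) :
    |(gaussianReal 0 v (Set.Icc (a - ε) (a + ε))).toReal -
        2 * ε / Real.sqrt (2 * Real.pi * (v : ℝ))| ≤
      ε * (|a| + ε) ^ 2 / (Real.sqrt (2 * Real.pi) * (v : ℝ) ^ ((3 : ℝ) / 2)) := by
  have hv' : (0 : ℝ) < (v : ℝ) := hv
  have hvne : v ≠ 0 := hv.ne'
  have hπ : (0 : ℝ) < 2 * Real.pi := by positivity
  have hsqrt : (0 : ℝ) < Real.sqrt (2 * Real.pi * v) := Real.sqrt_pos.2 (by positivity)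
  set s : Set ℝ := Set.Icc (a - ε) (a + ε) with hs
  set c : ℝ := (Real.sqrt (2 * Real.pi * v))⁻¹ with hc
  have h1 : (gaussianReal 0 v s).toReal = ∫ x in s, gaussianPDFReal 0 v x := by
    rw [gaussianReal_apply_eq_integral 0 hvne s, ENNReal.toReal_ofReal]
    exact integral_nonneg fun x => gaussianPDFReal_nonneg 0 v x
  have hvols : volume s = ENNReal.ofReal (2 * ε) := by
    rw [hs, Real.volume_Icc]; congr 1; ring
  have hvolfin : volume s < ⊤ := by rw [hvols]; exact ENNReal.ofReal_lt_top
  have h2 : (2 : ℝ) * ε / Real.sqrt (2 * Real.pi * v) = ∫ _x in s, c := by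
    rw [setIntegral_const, measureReal_def, hvols, ENNReal.toReal_ofReal (by linarith), smul_eq_mul, hc]
    field_simp
  have hint : Integrable (gaussianPDFReal 0 v) (volume.restrict s) :=
    (integrable_gaussianPDFReal 0 v).restrict
  have hintc : Integrable (fun _ : ℝ => c) (volume.restrict s) := integrable_const c
  have h3 : (gaussianReal 0 v s).toReal - 2 * ε / Real.sqrt (2 * Real.pi * v)
      = ∫ x in s, (gaussianPDFReal 0 v x - c) := by
    rw [h1, h2, integral_sub hint hintc]
  rw [h3]
  set C : ℝ := c * ((|a| + ε) ^ 2 / (2 * v)) with hC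
  have hcpos : 0 < c := by positivity
  have hbound : ∀ x ∈ s, ‖gaussianPDFReal 0 v x - c‖ ≤ C := by
    intro x hx
    have hxabs : |x| ≤ |a| + ε := by
      rw [abs_le]
      constructor
      · have h := hx.1; have h2 := neg_abs_le a; simp only [hs, Set.mem_Icc] at hx; linarith [hx.1]
      · have h2 := le_abs_self a; simp only [hs, Set.mem_Icc] at hx; linarith [hx.2]
    have hxsq : x ^ 2 ≤ (|a| + ε) ^ 2 := by
      nlinarith [sq_abs x, abs_nonneg x, abs_nonneg a]
    have hpdf : gaussianPDFReal 0 v x = c * Real.exp (-(x ^ 2) / (2 * v)) := by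
      simp [gaussianPDFReal, hc]
    have hexp1 : Real.exp (-(x ^ 2) / (2 * v)) ≤ 1 := by
      apply Real.exp_le_one_iff.2
      exact div_nonpos_of_nonpos_of_nonneg (neg_nonpos.2 (sq_nonneg x)) (by positivity)
    have hexp2 : 1 - Real.exp (-(x ^ 2) / (2 * v)) ≤ x ^ 2 / (2 * v) := by
      have h := Real.add_one_le_exp (-(x ^ 2) / (2 * v))
      have hrw : -(x ^ 2) / (2 * v) = -(x ^ 2 / (2 * v)) := by ring
      rw [hrw] at h ⊢
      linarith
    have hre : c * Real.exp (-(x ^ 2) / (2 * v)) - c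
        = -(c * (1 - Real.exp (-(x ^ 2) / (2 * v)))) := by ring
    rw [hpdf, Real.norm_eq_abs, hre, abs_neg,
      abs_of_nonneg (by nlinarith : (0:ℝ) ≤ c * (1 - Real.exp (-(x ^ 2) / (2 * v)))), hC]
    have h2v : (0:ℝ) < 2 * v := by positivity
    gcongr
    · exact hexp2.trans (by gcongr)
  have hmain := norm_setIntegral_le_of_norm_le_const hvolfin hbound
  rw [Real.norm_eq_abs] at hmain
  refine hmain.trans (le_of_eq ?_)
  rw [measureReal_def, hvols, ENNReal.toReal_ofReal (by linarith)]
  have hval : Real.sqrt (2 * Real.pi) * (v : ℝ) ^ ((3 : ℝ) / 2)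
      = Real.sqrt (2 * Real.pi * v) * v := by
    rw [Real.sqrt_mul hπ.le, show ((3:ℝ)/2) = (1:ℝ)/2 + 1 by norm_num,
      Real.rpow_add hv', Real.rpow_one, ← Real.sqrt_eq_rpow]
    ring
  rw [hval, hC, hc]
  field_simp
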